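/- Consider the maximal generations network with generation size K ≥ 1, i.e. the generations network with observation sets Ψ_k = {1,…,K} for every k, and let r_i be the signal counts from the equilibrium weight recursion. Then: (i) the aggregative efficiency exists and equals lim_{i→∞} r_i/i = (2K−1)/K², so social learning aggregates fewer than two signals per generation asymptotically for every K; and (ii) starting from the third generation, every generation aggregates at most three signals more than the previous one: for any K and any agents i in generation t and i′ in generation t−1 with t ≥ 3, r_i − r_{i′} ≤ 3. -/

import Mathlib

open Matrix Finset Filter Topology

/-- The equilibrium weight vectors of the sequential social-learning model. -/
noncomputable def eqW (Net : ℕ → Finset ℕ) (i : ℕ) : ℕ → ℝ :=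
  Nat.strongRecOn i (fun n prev =>
    let nb := (Net n).filter (fun j => j < n)
    if nb.Nonempty then
      let What : Matrix {j // j ∈ nb} (Fin (n - 1)) ℝ :=
        Matrix.of (fun j m => prev j.1 (Finset.mem_filter.mp j.2).2 (m.1 + 1))
      let beta : {j // j ∈ nb} → ℝ :=
        Matrix.vecMul (fun j => ∑ m, What j m) ((What * What.transpose)⁻¹)
      fun m => (if m = n then (1 : ℝ) else 0) +
        ∑ j : {j // j ∈ nb}, beta j * prev j.1 (Finset.mem_filter.mp j.2).2 m
    else fun m => if m = n then (1 : ℝ) else 0)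

/-- The number of signals aggregated by agent `i`: `r_i = Σ_j W_i(j)`. -/
noncomputable def rcount (Net : ℕ → Finset ℕ) (i : ℕ) : ℝ :=
  ∑ j ∈ Finset.range (i + 1), eqW Net i j

/-- The generations network with generation size `K` and observation sets `Ψ`:
`N(i) = ∅` for `1 ≤ i ≤ K`, and `N((t−1)K+k) = {(t−2)K+ψ : ψ ∈ Ψ_k}` for `t ≥ 2`,
`1 ≤ k ≤ K`. -/
def genNet (K : ℕ) (Ψ : ℕ → Finset ℕ) : ℕ → Finset ℕ := fun i =>
  if i ≤ K then ∅
  else (Ψ ((i - 1) % K + 1)).image (fun ψ => ((i - 1) / K - 1) * K + ψ)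



theorem strongRecOn_eq {motive : Nat → Sort*} (n : ℕ)
    (ind : ∀ n, (∀ m, m < n → motive m) → motive n) :
    Nat.strongRecOn n ind = ind n (fun m _ => Nat.strongRecOn m ind) := by
  unfold Nat.strongRecOn
  exact WellFounded.fix_eq _ _ _

theorem eqW_eq (Net : ℕ → Finset ℕ) (n : ℕ) :
    eqW Net n =
    (let nb := (Net n).filter (fun j => j < n)
    if nb.Nonempty then
      let What : Matrix {j // j ∈ nb} (Fin (n - 1)) ℝ :=
        Matrix.of (fun j m => eqW Net j.1 (m.1 + 1))
      let beta : {j // j ∈ nb} → ℝ :=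
        Matrix.vecMul (fun j => ∑ m, What j m) ((What * What.transpose)⁻¹)
      fun m => (if m = n then (1 : ℝ) else 0) +
        ∑ j : {j // j ∈ nb}, beta j * eqW Net j.1 m
    else fun m => if m = n then (1 : ℝ) else 0) := by
  unfold eqW
  rw [strongRecOn_eq]

theorem eqW_eq' (Net : ℕ → Finset ℕ) (n : ℕ)
    (hne : ((Net n).filter (fun j => j < n)).Nonempty) :
    eqW Net n = fun m => (if m = n then (1:ℝ) else 0) +
      ∑ j : {j // j ∈ (Net n).filter (fun j => j < n)},
        Matrix.vecMul
          (fun j => ∑ m : Fin (n-1),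
            Matrix.of (fun (j : {j // j ∈ (Net n).filter (fun j => j < n)})
              (m : Fin (n - 1)) => eqW Net j.1 (m.1 + 1)) j m)
          ((Matrix.of (fun (j : {j // j ∈ (Net n).filter (fun j => j < n)})
              (m : Fin (n - 1)) => eqW Net j.1 (m.1 + 1)) *
            (Matrix.of (fun (j : {j // j ∈ (Net n).filter (fun j => j < n)})
              (m : Fin (n - 1)) => eqW Net j.1 (m.1 + 1))).transpose)⁻¹) j
        * eqW Net j.1 m := by
  rw [eqW_eq]
  simp only [hne, if_true]

theorem eqW_step (Net : ℕ → Finset ℕ) (n : ℕ)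
    (hne : ((Net n).filter (fun j => j < n)).Nonempty) (R q : ℝ) (hq : 0 ≤ q)
    (hGram : ∀ j ∈ (Net n).filter (fun j => j < n), ∀ l ∈ (Net n).filter (fun j => j < n),
      (∑ m : Fin (n-1), eqW Net j (m.1 + 1) * eqW Net l (m.1 + 1))
        = (if j = l then 1 else 0) + q)
    (hRow : ∀ j ∈ (Net n).filter (fun j => j < n),
      (∑ m : Fin (n-1), eqW Net j (m.1 + 1)) = R) :
    eqW Net n = fun m => (if m = n then (1:ℝ) else 0) +
      (R / ((((Net n).filter (fun j => j < n)).card : ℝ) * q + 1)) *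
        ∑ j ∈ (Net n).filter (fun j => j < n), eqW Net j m := by
  set nb := (Net n).filter (fun j => j < n) with hnbdef
  set Kc : ℝ := (nb.card : ℝ) with hKc
  have hKc1 : 1 ≤ Kc := by
    rw [hKc]
    exact_mod_cast Finset.card_pos.2 hne
  have hD : (0:ℝ) < Kc * q + 1 := by nlinarith
  set D : ℝ := Kc * q + 1 with hDdef
  set What : Matrix {j // j ∈ nb} (Fin (n - 1)) ℝ :=
    Matrix.of (fun j m => eqW Net j.1 (m.1 + 1)) with hWhat
  set M : Matrix {j // j ∈ nb} {j // j ∈ nb} ℝ :=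
    Matrix.of (fun j l => (if j = l then 1 else 0) + q) with hM
  set N : Matrix {j // j ∈ nb} {j // j ∈ nb} ℝ :=
    Matrix.of (fun j l => (if j = l then 1 else 0) - q / D) with hN
  have hcard : Fintype.card {j // j ∈ nb} = nb.card := Fintype.card_coe nb
  have hWM : What * What.transpose = M := by
    ext j l
    rw [Matrix.mul_apply]
    simp only [hWhat, hM, Matrix.transpose_apply, Matrix.of_apply]
    rw [hGram j.1 j.2 l.1 l.2]
    congr 1
    simp only [Subtype.ext_iff]
  have hMN : M * N = 1 := by
    ext j l
    rw [Matrix.mul_apply]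
    simp only [hM, hN, Matrix.of_apply]
    have expand : ∀ p : {j // j ∈ nb},
        ((if j = p then (1:ℝ) else 0) + q) * ((if p = l then 1 else 0) - q / D)
        = (if j = p then (1:ℝ) else 0) * (if p = l then 1 else 0)
          - (if j = p then (1:ℝ) else 0) * (q / D)
          + q * (if p = l then 1 else 0) - q * (q / D) := by
      intro p; ring
    rw [Finset.sum_congr rfl (fun p _ => expand p)]
    rw [Finset.sum_sub_distrib, Finset.sum_add_distrib, Finset.sum_sub_distrib]
    have e1 : ∑ p : {j // j ∈ nb},
        (if j = p then (1:ℝ) else 0) * (if p = l then 1 else 0)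
        = if j = l then 1 else 0 := by
      simp only [ite_mul, one_mul, zero_mul]
      rw [Finset.sum_ite_eq]
      simp
    have e2 : ∑ p : {j // j ∈ nb}, (if j = p then (1:ℝ) else 0) * (q / D) = q / D := by
      simp only [ite_mul, one_mul, zero_mul]
      rw [Finset.sum_ite_eq]
      simp
    have e3 : ∑ p : {j // j ∈ nb}, q * (if p = l then (1:ℝ) else 0) = q := by
      simp only [mul_ite, mul_one, mul_zero]
      rw [Finset.sum_ite_eq']
      simp
    have e4 : ∑ _p : {j // j ∈ nb}, q * (q / D) = Kc * (q * (q / D)) := by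
      rw [Finset.sum_const, Finset.card_univ, hcard]
      simp [hKc, nsmul_eq_mul]
    rw [e1, e2, e3, e4]
    have hone : (1 : Matrix {j // j ∈ nb} {j // j ∈ nb} ℝ) j l
        = if j = l then 1 else 0 := by
      simp [Matrix.one_apply]
    rw [hone]
    have hDne : D ≠ 0 := ne_of_gt hD
    have h5 : Kc * (q * (q / D)) = q * (Kc * q) / D := by ring
    rw [h5]
    have h6 : q / D + q * (Kc * q) / D = q := by
      rw [← add_div, div_eq_iff hDne, hDdef]
      ring
    linarith [h6]
  have hinv : (What * What.transpose)⁻¹ = N := by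
    rw [hWM]
    exact Matrix.inv_eq_right_inv hMN
  have hrow' : (fun j : {j // j ∈ nb} => ∑ m, What j m) = fun _ => R := by
    funext j
    simp only [hWhat, Matrix.of_apply]
    exact hRow j.1 j.2
  have hbeta : Matrix.vecMul (fun j : {j // j ∈ nb} => ∑ m, What j m)
      ((What * What.transpose)⁻¹) = fun _ => R / D := by
    rw [hinv, hrow']
    funext j
    show dotProduct (fun _ => R) (fun p => N p j) = R / D
    rw [dotProduct]
    have : ∀ p : {j // j ∈ nb}, R * N p j
        = R * (if p = j then 1 else 0) - R * (q / D) := by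
      intro p
      simp only [hN, Matrix.of_apply]
      ring
    rw [Finset.sum_congr rfl (fun p _ => this p)]
    rw [Finset.sum_sub_distrib]
    have e3 : ∑ p : {j // j ∈ nb}, R * (if p = j then (1:ℝ) else 0) = R := by
      simp only [mul_ite, mul_one, mul_zero]
      rw [Finset.sum_ite_eq']
      simp
    have e4 : ∑ _p : {j // j ∈ nb}, R * (q / D) = Kc * (R * (q / D)) := by
      rw [Finset.sum_const, Finset.card_univ, hcard]
      simp [hKc, nsmul_eq_mul]
    rw [e3, e4]
    have hDne : D ≠ 0 := ne_of_gt hD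
    have h5 : Kc * (R * (q / D)) = R * (Kc * q) / D := by ring
    rw [h5, eq_div_iff hDne, sub_mul, div_mul_cancel₀ _ hDne, hDdef]
    ring
  rw [eqW_eq' Net n hne]
  funext m
  congr 1
  have : ∀ j : {j // j ∈ nb},
      Matrix.vecMul (fun j : {j // j ∈ nb} => ∑ m, What j m)
        ((What * What.transpose)⁻¹) j * eqW Net j.1 m
      = (R / D) * eqW Net j.1 m := by
    intro j
    rw [hbeta]
  rw [Finset.sum_congr rfl (fun j _ => this j)]
  rw [← Finset.mul_sum]
  congr 1
  exact Finset.sum_coe_sort nb (fun j => eqW Net j m)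


theorem eqW_base (Net : ℕ → Finset ℕ) (n : ℕ)
    (h : (Net n).filter (fun j => j < n) = ∅) :
    eqW Net n = fun m => if m = n then (1:ℝ) else 0 := by
  rw [eqW_eq]
  simp [h]

theorem sum_fin_shift (g : ℕ → ℝ) (n N : ℕ) (hn : N ≤ n)
    (hg : ∀ m, g m ≠ 0 → 1 ≤ m ∧ m ≤ N) :
    ∑ m : Fin n, g (m.1 + 1) = ∑ m ∈ Finset.range (N + 1), g m := by
  rw [Fin.sum_univ_eq_sum_range (fun m => g (m + 1)) n]
  rw [Finset.sum_range_succ' g N]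
  have h0 : g 0 = 0 := by
    by_contra h
    exact absurd (hg 0 h).1 (by norm_num)
  rw [h0, add_zero]
  symm
  apply Finset.sum_subset (Finset.range_subset_range.2 hn)
  intro m hm hmn
  by_contra h
  have h2 := (hg (m + 1) h).2
  simp only [Finset.mem_range] at hm hmn
  omega

noncomputable def Rseq (K : ℕ) : ℕ → ℝ
  | 0 => 0
  | 1 => 1
  | (n+2) => 1 + K * (Rseq K (n+1))^2 / (K * (Rseq K (n+1) - 1) + 1)

section scalar
variable {K : ℕ} (hK : 1 ≤ K)
include hK

lemma hKR : (1:ℝ) ≤ K := by exact_mod_cast hK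
lemma hKR0 : (0:ℝ) < K := lt_of_lt_of_le one_pos (hKR hK)

lemma Rseq_ge_one : ∀ n, 1 ≤ Rseq K (n+1) := by
  intro n
  induction n with
  | zero => simp [Rseq]
  | succ n ih =>
    have hD : (0:ℝ) < K * (Rseq K (n+1) - 1) + 1 := by
      have : (0:ℝ) ≤ K * (Rseq K (n+1) - 1) :=
        mul_nonneg (le_of_lt (hKR0 hK)) (by linarith)
      linarith
    have : (0:ℝ) ≤ K * (Rseq K (n+1))^2 / (K * (Rseq K (n+1) - 1) + 1) :=
      div_nonneg (mul_nonneg (le_of_lt (hKR0 hK)) (sq_nonneg _)) hD.le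
    show 1 ≤ 1 + K * (Rseq K (n+1))^2 / (K * (Rseq K (n+1) - 1) + 1)
    linarith

lemma Dpos (n : ℕ) : (0:ℝ) < K * (Rseq K (n+1) - 1) + 1 := by
  have h := Rseq_ge_one hK n
  have : (0:ℝ) ≤ K * (Rseq K (n+1) - 1) := mul_nonneg (le_of_lt (hKR0 hK)) (by linarith)
  linarith

lemma Rseq_diff (n : ℕ) :
    Rseq K (n+2) - Rseq K (n+1)
      = 1 + ((K:ℝ) - 1) * Rseq K (n+1) / (K * (Rseq K (n+1) - 1) + 1) := by
  have hD := Dpos hK n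
  show 1 + (K:ℝ) * (Rseq K (n+1))^2 / (K * (Rseq K (n+1) - 1) + 1) - Rseq K (n+1) = _
  field_simp
  ring

lemma Rseq_diff_ge_one (n : ℕ) : 1 ≤ Rseq K (n+2) - Rseq K (n+1) := by
  rw [Rseq_diff hK]
  have hD := Dpos hK n
  have h1 := Rseq_ge_one hK n
  have hKR := hKR hK
  have : (0:ℝ) ≤ ((K:ℝ) - 1) * Rseq K (n+1) / (K * (Rseq K (n+1) - 1) + 1) :=
    div_nonneg (mul_nonneg (by linarith) (by linarith)) hD.le
  linarith

lemma Rseq_ge_two (n : ℕ) : 2 ≤ Rseq K (n+2) := by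
  have := Rseq_diff_ge_one hK n
  have := Rseq_ge_one hK n
  linarith

lemma Rseq_diff_le_three (n : ℕ) : Rseq K (n+3) - Rseq K (n+2) ≤ 3 := by
  rw [show n+3 = (n+1)+2 by ring, Rseq_diff hK (n+1)]
  have hD := Dpos hK (n+1)
  have h2 : 2 ≤ Rseq K (n+2) := Rseq_ge_two hK n
  have hKR := hKR hK
  have : ((K:ℝ) - 1) * Rseq K (n+2) / (K * (Rseq K (n+2) - 1) + 1) ≤ 2 := by
    rw [div_le_iff₀ hD]
    nlinarith
  linarith

lemma Rseq_ge_lin : ∀ n : ℕ, (n:ℝ) ≤ Rseq K (n+1) := by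
  intro n
  induction n with
  | zero => simp [Rseq]
  | succ n ih =>
    have := Rseq_diff_ge_one hK n
    push_cast
    linarith

lemma Rseq_atTop : Tendsto (fun n => Rseq K n) atTop atTop := by
  apply tendsto_atTop_mono' _ (_ : ∀ᶠ n : ℕ in atTop, (n:ℝ) - 1 ≤ Rseq K n)
  · have : Tendsto (fun n : ℕ => (n:ℝ)) atTop atTop := tendsto_natCast_atTop_atTop
    exact tendsto_atTop_add_const_right atTop (-1) this
  · filter_upwards [eventually_ge_atTop 1] with n hn
    obtain ⟨m, rfl⟩ := Nat.exists_eq_add_of_le hn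
    rw [Nat.add_comm 1 m]
    have := Rseq_ge_lin hK m
    push_cast
    linarith

lemma g_tendsto :
    Tendsto (fun x : ℝ => 1 + ((K:ℝ) - 1) * x / (K * (x - 1) + 1)) atTop
      (𝓝 ((2*(K:ℝ) - 1)/K)) := by
  have hK0 : (K:ℝ) ≠ 0 := ne_of_gt (hKR0 hK)
  have h1 : Tendsto (fun x : ℝ => (K:ℝ) + (1 - K)/x) atTop (𝓝 ((K:ℝ) + 0)) :=
    tendsto_const_nhds.add (Tendsto.div_atTop tendsto_const_nhds tendsto_id)
  rw [add_zero] at h1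
  have h2 : Tendsto (fun x : ℝ => ((K:ℝ) - 1) / ((K:ℝ) + (1 - K)/x)) atTop
      (𝓝 (((K:ℝ) - 1) / K)) := tendsto_const_nhds.div h1 hK0
  have h3 : Tendsto (fun x : ℝ => 1 + ((K:ℝ) - 1) / ((K:ℝ) + (1 - K)/x)) atTop
      (𝓝 (1 + ((K:ℝ) - 1) / K)) := tendsto_const_nhds.add h2
  have heq : (1 + ((K:ℝ) - 1) / K) = (2*(K:ℝ) - 1)/K := by field_simp; ring
  rw [heq] at h3
  apply h3.congr'
  filter_upwards [eventually_ge_atTop (1:ℝ)] with x hx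
  have hx0 : x ≠ 0 := by linarith
  have hden : (K:ℝ) * (x - 1) + 1 > 0 := by nlinarith [hKR hK]
  have hrw : (K:ℝ) + (1 - K)/x = (K * (x-1) + 1)/x := by field_simp; ring
  rw [hrw, div_div_eq_mul_div]

lemma diff_tendsto :
    Tendsto (fun n => Rseq K (n+1) - Rseq K n) atTop (𝓝 ((2*(K:ℝ) - 1)/K)) := by
  have hcomp := (g_tendsto hK).comp (Rseq_atTop hK)
  apply hcomp.congr'
  filter_upwards [eventually_ge_atTop 1] with n hn
  obtain ⟨m, rfl⟩ := Nat.exists_eq_add_of_le hn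
  simp only [Function.comp]
  rw [Nat.add_comm 1 m]
  exact (Rseq_diff hK m).symm

lemma Rseq_div_tendsto :
    Tendsto (fun n : ℕ => ((n:ℝ))⁻¹ * Rseq K n) atTop (𝓝 ((2*(K:ℝ) - 1)/K)) := by
  have h := (diff_tendsto hK).cesaro
  apply h.congr
  intro n
  rw [Finset.sum_range_sub (fun i => Rseq K i)]
  simp [Rseq]

end scalar

section net

variable (K : ℕ) (hK : 1 ≤ K)

lemma genNet_filter_empty (Ψ : ℕ → Finset ℕ) (i : ℕ) (hi : i ≤ K) :
    ((genNet K Ψ) i).filter (fun j => j < i) = ∅ := by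
  simp [genNet, hi]

include hK in
lemma genNet_filter (i : ℕ) (hi : K < i) :
    ((genNet K (fun _ => Finset.Icc 1 K)) i).filter (fun j => j < i)
      = Finset.Ioc (((i-1)/K - 1)*K) (((i-1)/K)*K) := by
  have hK0 : 0 < K := hK
  have ht : 1 ≤ (i-1)/K := (Nat.one_le_div_iff hK0).2 (by omega)
  have hc : ((i-1)/K - 1)*K + K = ((i-1)/K)*K := by
    have h1 : ((i-1)/K - 1) + 1 = (i-1)/K := Nat.succ_pred_eq_of_pos ht
    calc ((i-1)/K - 1)*K + K = (((i-1)/K - 1) + 1)*K := by rw [Nat.succ_mul]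
    _ = ((i-1)/K)*K := by rw [h1]
  have himg : (genNet K (fun _ => Finset.Icc 1 K)) i
      = Finset.Ioc (((i-1)/K - 1)*K) (((i-1)/K)*K) := by
    simp only [genNet]
    rw [if_neg (by omega)]
    rw [Finset.image_add_left_Icc]
    rw [← hc]
    exact Finset.Icc_add_one_left_eq_Ioc _ _
  rw [himg]
  apply Finset.filter_true_of_mem
  intro j hj
  have h2 := (Finset.mem_Ioc.mp hj).2
  have h3 : ((i-1)/K)*K ≤ i - 1 := Nat.div_mul_le_self _ _
  omega

lemma div_eq_gen (s i : ℕ) (h1 : s*K < i) (h2 : i ≤ (s+1)*K) : (i-1)/K = s := by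
  apply Nat.div_eq_of_lt_le
  · exact Nat.le_pred_of_lt h1
  · have hi0 : 0 < i := lt_of_le_of_lt (Nat.zero_le _) h1
    exact lt_of_lt_of_le (Nat.pred_lt hi0.ne') h2

end net

lemma main_ind (K : ℕ) (hK : 1 ≤ K) (s : ℕ) :
    ∃ w : ℕ → ℝ,
      (∀ m, w m ≠ 0 → 1 ≤ m ∧ m ≤ s*K) ∧
      (∀ i, s*K < i → i ≤ (s+1)*K →
        eqW (genNet K (fun _ => Finset.Icc 1 K)) i
          = fun m => (if m = i then (1:ℝ) else 0) + w m) ∧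
      (∑ m ∈ Finset.range (s*K+1), w m) = Rseq K (s+1) - 1 ∧
      (∑ m ∈ Finset.range (s*K+1), (w m)^2) = Rseq K (s+1) - 1 := by
  set Net := genNet K (fun _ => Finset.Icc 1 K) with hNet
  induction s with
  | zero =>
    refine ⟨fun _ => 0, by simp, ?_, by simp [Rseq], by simp [Rseq]⟩
    intro i h1 h2
    rw [eqW_base Net i (genNet_filter_empty K _ i (by simpa using h2))]
    funext m
    simp
  | succ s IH =>
    obtain ⟨w, hsupp, hagents, hsum, hsum2⟩ := IH
    have hK0 : 0 < K := hK
    set R := Rseq K (s+1) with hRdef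
    have hR1 : 1 ≤ R := Rseq_ge_one hK s
    have hKR0' : (0:ℝ) < K := by exact_mod_cast hK0
    have hq0 : (0:ℝ) ≤ R - 1 := by linarith
    have hD : (0:ℝ) < (K:ℝ)*(R-1) + 1 := by nlinarith
    have hsm : (s+1)*K = s*K + K := Nat.succ_mul s K
    have hsm2 : (s+2)*K = (s+1)*K + K := Nat.succ_mul (s+1) K
    have hw0 : ∀ m, s*K < m → w m = 0 := by
      intro m hm
      by_contra h
      have h2 := (hsupp m h).2
      omega
    have hwext : ∑ m ∈ Finset.range ((s+1)*K+1), w m = R - 1 := by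
      rw [← hsum]
      symm
      apply Finset.sum_subset (Finset.range_subset_range.2 (by rw [hsm]; omega))
      intro m hm hmn
      simp only [Finset.mem_range] at hm hmn
      exact hw0 m (by omega)
    have hwext2 : ∑ m ∈ Finset.range ((s+1)*K+1), (w m)^2 = R - 1 := by
      rw [← hsum2]
      symm
      apply Finset.sum_subset (Finset.range_subset_range.2 (by rw [hsm]; omega))
      intro m hm hmn
      simp only [Finset.mem_range] at hm hmn
      rw [hw0 m (by omega)]
      ring
    have hcard : (Finset.Ioc (s*K) ((s+1)*K)).card = K := by
      rw [Nat.card_Ioc, hsm, Nat.add_sub_cancel_left]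
    have hioc_sub : Finset.Ioc (s*K) ((s+1)*K) ⊆ Finset.range ((s+1)*K+1) := by
      intro m hm
      rw [Finset.mem_range]
      exact Nat.lt_succ_of_le (Finset.mem_Ioc.mp hm).2
    have hWnb : ∀ j ∈ Finset.Ioc (s*K) ((s+1)*K),
        eqW Net j = fun m => (if m = j then (1:ℝ) else 0) + w m := by
      intro j hj
      exact hagents j (Finset.mem_Ioc.mp hj).1 (Finset.mem_Ioc.mp hj).2
    have hsupW : ∀ j ∈ Finset.Ioc (s*K) ((s+1)*K), ∀ m, eqW Net j m ≠ 0 →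
        1 ≤ m ∧ m ≤ (s+1)*K := by
      intro j hj m hm0
      have hm : (if m = j then (1:ℝ) else 0) + w m ≠ 0 := by
        rw [hWnb j hj] at hm0; exact hm0
      by_cases hmj : m = j
      · subst hmj
        have h := Finset.mem_Ioc.mp hj
        exact ⟨lt_of_le_of_lt (Nat.zero_le _) h.1, h.2⟩
      · rw [if_neg hmj, zero_add] at hm
        exact ⟨(hsupp m hm).1, le_trans (hsupp m hm).2 (by rw [hsm]; exact Nat.le_add_right _ _)⟩
    have hagents' : ∀ i, (s+1)*K < i → i ≤ (s+2)*K →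
        eqW Net i = fun m => (if m = i then (1:ℝ) else 0) +
          (R/((K:ℝ)*(R-1)+1)) *
            ((if m ∈ Finset.Ioc (s*K) ((s+1)*K) then (1:ℝ) else 0) + K * w m) := by
      intro i h1 h2
      have hKi : K < i := lt_of_le_of_lt (by rw [hsm]; exact Nat.le_add_left _ _) h1
      have hdiv : (i-1)/K = s+1 := div_eq_gen K (s+1) i h1 h2
      have hnb : ((Net) i).filter (fun j => j < i) = Finset.Ioc (s*K) ((s+1)*K) := by
        rw [hNet, genNet_filter K hK i hKi, hdiv]
        simp
      have hne : (((Net) i).filter (fun j => j < i)).Nonempty := by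
        rw [hnb]
        exact Finset.nonempty_Ioc.2 (by rw [hsm]; omega)
      have hbound : (s+1)*K ≤ i - 1 := Nat.le_pred_of_lt h1
      have hGram : ∀ j ∈ ((Net) i).filter (fun j => j < i),
          ∀ l ∈ ((Net) i).filter (fun j => j < i),
          (∑ m : Fin (i-1), eqW Net j (m.1 + 1) * eqW Net l (m.1 + 1))
            = (if j = l then (1:ℝ) else 0) + (R - 1) := by
        simp only [hnb]
        intro j hj l hl
        have hjR : j ∈ Finset.range ((s+1)*K+1) := hioc_sub hj
        have hlR : l ∈ Finset.range ((s+1)*K+1) := hioc_sub hl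
        rw [sum_fin_shift (fun x => eqW Net j x * eqW Net l x) (i-1) ((s+1)*K) hbound
          (fun m hm => (hsupW j hj m (mul_ne_zero_iff.mp hm).1))]
        simp only [hWnb j hj, hWnb l hl]
        have expand : ∀ m, ((if m = j then (1:ℝ) else 0) + w m) *
            ((if m = l then (1:ℝ) else 0) + w m)
            = (if m = j then (1:ℝ) else 0) * (if m = l then (1:ℝ) else 0)
              + ((if m = j then (1:ℝ) else 0) * w m
              + (w m * (if m = l then (1:ℝ) else 0) + w m * w m)) := by
          intro m; ring
        rw [Finset.sum_congr rfl (fun m _ => expand m)]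
        rw [Finset.sum_add_distrib, Finset.sum_add_distrib, Finset.sum_add_distrib]
        have e1 : ∑ m ∈ Finset.range ((s+1)*K+1),
            (if m = j then (1:ℝ) else 0) * (if m = l then (1:ℝ) else 0)
            = if j = l then (1:ℝ) else 0 := by
          simp only [ite_mul, one_mul, zero_mul]
          rw [Finset.sum_ite_eq' _ j (fun m => if m = l then (1:ℝ) else 0), if_pos hjR]
        have e2 : ∑ m ∈ Finset.range ((s+1)*K+1), (if m = j then (1:ℝ) else 0) * w m
            = 0 := by
          simp only [ite_mul, one_mul, zero_mul]
          rw [Finset.sum_ite_eq' _ j w, if_pos hjR]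
          exact hw0 j (Finset.mem_Ioc.mp hj).1
        have e3 : ∑ m ∈ Finset.range ((s+1)*K+1), w m * (if m = l then (1:ℝ) else 0)
            = 0 := by
          simp only [mul_ite, mul_one, mul_zero]
          rw [Finset.sum_ite_eq' _ l w, if_pos hlR]
          exact hw0 l (Finset.mem_Ioc.mp hl).1
        have e4 : ∑ m ∈ Finset.range ((s+1)*K+1), w m * w m = R - 1 := by
          rw [Finset.sum_congr rfl (fun m _ => (sq (w m)).symm)]
          exact hwext2
        rw [e1, e2, e3, e4]
        ring
      have hRow : ∀ j ∈ ((Net) i).filter (fun j => j < i),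
          (∑ m : Fin (i-1), eqW Net j (m.1 + 1)) = R := by
        simp only [hnb]
        intro j hj
        have hjR : j ∈ Finset.range ((s+1)*K+1) := hioc_sub hj
        rw [sum_fin_shift (fun x => eqW Net j x) (i-1) ((s+1)*K) hbound (hsupW j hj)]
        simp only [hWnb j hj]
        rw [Finset.sum_add_distrib]
        rw [Finset.sum_ite_eq' _ j (fun _ => (1:ℝ)), if_pos hjR, hwext]
        ring
      have hstep := eqW_step Net i hne R (R-1) hq0 hGram hRow
      simp only [hnb, hcard] at hstep
      rw [hstep]
      funext m
      congr 1
      have hsumnb : ∑ j ∈ Finset.Ioc (s*K) ((s+1)*K), eqW Net j m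
          = (if m ∈ Finset.Ioc (s*K) ((s+1)*K) then (1:ℝ) else 0) + K * w m := by
        rw [Finset.sum_congr rfl (fun j hj => by rw [hWnb j hj])]
        rw [Finset.sum_add_distrib]
        congr 1
        · exact Finset.sum_ite_eq _ m (fun _ => (1:ℝ))
        · rw [Finset.sum_const, hcard]
          simp [nsmul_eq_mul]
      rw [hsumnb]
    have hR2 : Rseq K (s+2) = 1 + (K:ℝ) * R^2/((K:ℝ)*(R-1)+1) := by
      rw [hRdef]
      rfl
    have i1 : ∑ m ∈ Finset.range ((s+1)*K+1),
        (if m ∈ Finset.Ioc (s*K) ((s+1)*K) then (1:ℝ) else 0) = (K:ℝ) := by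
      rw [Finset.sum_ite_mem, Finset.inter_eq_right.mpr hioc_sub,
        Finset.sum_const, hcard]
      simp
    refine ⟨fun m => (R/((K:ℝ)*(R-1)+1)) *
        ((if m ∈ Finset.Ioc (s*K) ((s+1)*K) then (1:ℝ) else 0) + K * w m),
      ?_, hagents', ?_, ?_⟩
    · intro m hm
      by_cases hmem : m ∈ Finset.Ioc (s*K) ((s+1)*K)
      · have h := Finset.mem_Ioc.mp hmem
        exact ⟨lt_of_le_of_lt (Nat.zero_le _) h.1, h.2⟩
      · have hwm : w m ≠ 0 := by
          intro h0
          apply hm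
          show R / ((K:ℝ)*(R-1)+1) *
            ((if m ∈ Finset.Ioc (s*K) ((s+1)*K) then (1:ℝ) else 0) + K * w m) = 0
          rw [if_neg hmem, h0]
          ring
        exact ⟨(hsupp m hwm).1, le_trans (hsupp m hwm).2 (by rw [hsm]; exact Nat.le_add_right _ _)⟩
    · rw [← Finset.mul_sum, Finset.sum_add_distrib, i1, ← Finset.mul_sum, hwext]
      rw [hR2]
      have hrhs : (1:ℝ) + (K:ℝ)*R^2/((K:ℝ)*(R-1)+1) - 1 = (K:ℝ)*R^2/((K:ℝ)*(R-1)+1) := by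
        ring
      rw [hrhs, div_mul_eq_mul_div]
      congr 1
      ring
    · have hpt : ∀ m, ((R/((K:ℝ)*(R-1)+1)) *
          ((if m ∈ Finset.Ioc (s*K) ((s+1)*K) then (1:ℝ) else 0) + K * w m))^2
          = (R/((K:ℝ)*(R-1)+1))^2 *
            ((if m ∈ Finset.Ioc (s*K) ((s+1)*K) then (1:ℝ) else 0) + (K:ℝ)^2 * (w m)^2) := by
        intro m
        by_cases hmem : m ∈ Finset.Ioc (s*K) ((s+1)*K)
        · rw [if_pos hmem, hw0 m (Finset.mem_Ioc.mp hmem).1]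
          ring
        · rw [if_neg hmem]
          ring
      rw [Finset.sum_congr rfl (fun m _ => hpt m)]
      rw [← Finset.mul_sum, Finset.sum_add_distrib, i1, ← Finset.mul_sum, hwext2]
      rw [hR2]
      have hrhs : (1:ℝ) + (K:ℝ)*R^2/((K:ℝ)*(R-1)+1) - 1 = (K:ℝ)*R^2/((K:ℝ)*(R-1)+1) := by
        ring
      rw [hrhs]
      have hKD : (K:ℝ) + (K:ℝ)^2*(R-1) = (K:ℝ) * ((K:ℝ)*(R-1)+1) := by ring
      rw [hKD, div_pow]
      rw [div_mul_eq_mul_div, div_eq_div_iff (pow_ne_zero 2 hD.ne') hD.ne']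
      ring

lemma rcount_gen (K : ℕ) (hK : 1 ≤ K) (s i : ℕ) (h1 : s*K < i) (h2 : i ≤ (s+1)*K) :
    rcount (genNet K (fun _ => Finset.Icc 1 K)) i = Rseq K (s+1) := by
  obtain ⟨w, hsupp, hagents, hsum, _⟩ := main_ind K hK s
  rw [rcount]
  simp only [hagents i h1 h2]
  rw [Finset.sum_add_distrib]
  have e1 : ∑ m ∈ Finset.range (i+1), (if m = i then (1:ℝ) else 0) = 1 := by
    rw [Finset.sum_ite_eq' _ i (fun _ => (1:ℝ)), if_pos (Finset.mem_range.2 (Nat.lt_succ_self i))]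
  have e2 : ∑ m ∈ Finset.range (i+1), w m = Rseq K (s+1) - 1 := by
    rw [← hsum]
    symm
    apply Finset.sum_subset (Finset.range_subset_range.2 (Nat.succ_le_succ (le_of_lt h1)))
    intro m hm hmn
    simp only [Finset.mem_range] at hm hmn
    by_contra h
    have := (hsupp m h).2
    omega
  rw [e1, e2]
  ring


/-- In the maximal generations network with generation size `K ≥ 1`
(observation sets `Ψ_k = {1,…,K}` for every `k`): (i) the aggregative efficiency
exists and equals `(2K−1)/K²`; (ii) for `t ≥ 3`, any agent in generation `t`
aggregates at most three signals more than any agent in generation `t−1`. -/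
theorem maximal_generations_rate (K : ℕ) (hK : 1 ≤ K) :
    Tendsto (fun i : ℕ => rcount (genNet K (fun _ => Finset.Icc 1 K)) i / (i : ℝ))
        atTop (nhds ((2 * (K : ℝ) - 1) / (K : ℝ) ^ 2)) ∧
    (∀ t : ℕ, 3 ≤ t → ∀ k ∈ Finset.Icc 1 K, ∀ k' ∈ Finset.Icc 1 K,
      rcount (genNet K (fun _ => Finset.Icc 1 K)) ((t - 1) * K + k)
        - rcount (genNet K (fun _ => Finset.Icc 1 K)) ((t - 2) * K + k') ≤ 3) := by
  have hK0 : 0 < K := hK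
  have hKR' : (0:ℝ) < K := by exact_mod_cast hK0
  constructor
  · -- the limit
    set T : ℕ → ℕ := fun i => (i-1)/K + 1 with hT
    have hTat : Tendsto T atTop atTop := by
      apply tendsto_atTop_atTop.2
      intro b
      refine ⟨b*K+1, fun i hi => ?_⟩
      have hbK : b*K ≤ i - 1 := by omega
      have : b ≤ (i-1)/K := (Nat.le_div_iff_mul_le hK0).2 hbK
      simp only [hT]
      omega
    have hcomp : Tendsto (fun i : ℕ => ((T i : ℝ))⁻¹ * Rseq K (T i)) atTop
        (𝓝 ((2*(K:ℝ) - 1)/K)) := (Rseq_div_tendsto hK).comp hTat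
    have hub : ∀ i : ℕ, T i * K ≤ i - 1 + K := by
      intro i
      simp only [hT]
      rw [Nat.add_mul, one_mul]
      exact Nat.add_le_add_right (Nat.div_mul_le_self _ _) K
    have hlb : ∀ i : ℕ, i ≤ T i * K := by
      intro i
      simp only [hT]
      rw [Nat.add_mul, one_mul]
      have := Nat.lt_div_mul_add (a := i - 1) hK0
      omega
    have hu : Tendsto (fun i : ℕ => (1/(K:ℝ))*(1+((K:ℝ)-1)*((i:ℝ))⁻¹)) atTop
        (𝓝 (1/(K:ℝ))) := by
      have h0 : Tendsto (fun i : ℕ => ((i:ℝ))⁻¹) atTop (𝓝 0) :=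
        tendsto_inv_atTop_zero.comp tendsto_natCast_atTop_atTop
      have h1 := ((tendsto_const_nhds (x := (1:ℝ))).add (h0.const_mul ((K:ℝ)-1))).const_mul (1/(K:ℝ))
      simpa using h1
    have hratio : Tendsto (fun i : ℕ => (T i : ℝ) / i) atTop (𝓝 (1/(K:ℝ))) := by
      apply tendsto_of_tendsto_of_tendsto_of_le_of_le' tendsto_const_nhds hu
      · filter_upwards [eventually_ge_atTop 1] with i hi
        have hi0 : (0:ℝ) < i := by exact_mod_cast hi
        rw [div_le_div_iff₀ hKR' hi0, one_mul]
        have h := hlb i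
        have h2 : (i:ℝ) ≤ ((T i * K : ℕ) : ℝ) := Nat.cast_le.2 h
        rwa [Nat.cast_mul] at h2
      · filter_upwards [eventually_ge_atTop 1] with i hi
        have hi0 : (0:ℝ) < i := by exact_mod_cast hi
        have hub' : (T i : ℝ) * K ≤ (i:ℝ) - 1 + K := by
          have h := hub i
          have h2 : ((T i : ℕ):ℝ) * K ≤ ((i - 1 + K : ℕ):ℝ) := by
            rw [← Nat.cast_mul]
            exact Nat.cast_le.2 h
          have h3 : ((i - 1 + K : ℕ):ℝ) = (i:ℝ) - 1 + K := by
            push_cast [Nat.cast_sub hi]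
            ring
          rw [h3] at h2
          exact h2
        have hKi0 : (0:ℝ) < (K:ℝ) * i := by positivity
        have hrhs : (1/(K:ℝ))*(1+((K:ℝ)-1)*(i:ℝ)⁻¹) = ((i:ℝ) - 1 + K)/((K:ℝ)*i) := by
          field_simp
          ring
        rw [hrhs, div_le_div_iff₀ hi0 hKi0]
        nlinarith [hub', hi0]
    have hprod := hcomp.mul hratio
    have hlim : (2*(K:ℝ) - 1)/K * (1/K) = (2*(K:ℝ) - 1)/(K:ℝ)^2 := by
      rw [div_mul_div_comm, mul_one, sq]
    rw [hlim] at hprod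
    apply hprod.congr'
    filter_upwards [eventually_ge_atTop 1] with i hi
    have h1 : ((i-1)/K)*K < i := by
      have h := Nat.div_mul_le_self (i-1) K
      omega
    have h2 : i ≤ ((i-1)/K + 1)*K := by
      have := Nat.lt_div_mul_add (a := i - 1) hK0
      rw [Nat.add_mul, one_mul]
      omega
    have hrc : rcount (genNet K (fun _ => Finset.Icc 1 K)) i = Rseq K (T i) :=
      rcount_gen K hK ((i-1)/K) i h1 h2
    rw [hrc]
    have hT0 : ((T i : ℕ) : ℝ) ≠ 0 := by
      simp only [hT]
      positivity
    calc ((T i : ℝ))⁻¹ * Rseq K (T i) * ((T i : ℝ) / i)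
        = Rseq K (T i) * (((T i : ℝ))⁻¹ * (T i : ℝ)) / i := by ring
    _ = Rseq K (T i) / i := by rw [inv_mul_cancel₀ hT0, mul_one]
  · intro t ht k hk k' hk'
    obtain ⟨n, rfl⟩ := Nat.exists_eq_add_of_le ht
    have e1 : 3 + n - 1 = n + 2 := by omega
    have e2 : 3 + n - 2 = n + 1 := by omega
    rw [e1, e2]
    have hk1 := (Finset.mem_Icc.mp hk).1
    have hk2 := (Finset.mem_Icc.mp hk).2
    have hk1' := (Finset.mem_Icc.mp hk').1
    have hk2' := (Finset.mem_Icc.mp hk').2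
    rw [rcount_gen K hK (n+2) ((n+2)*K + k)
        (Nat.lt_add_of_pos_right (lt_of_lt_of_le Nat.zero_lt_one hk1))
        (by rw [Nat.succ_mul (n+2) K]; exact Nat.add_le_add_left hk2 _)]
    rw [rcount_gen K hK (n+1) ((n+1)*K + k')
        (Nat.lt_add_of_pos_right (lt_of_lt_of_le Nat.zero_lt_one hk1'))
        (by rw [Nat.succ_mul (n+1) K]; exact Nat.add_le_add_left hk2' _)]
    exact Rseq_diff_le_three hK n
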